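/- Let K be a finite simplicial complex, F the set of discrete Morse functions on K, and ~ the transitive-connectedness equivalence relation generated by isomorphisms and birth-death transitions of discrete Morse complexes. Then the quotient F/~ is a single point: all discrete Morse functions on K are transitively connected. -/
import Mathlib


open Classical
open scoped Classical

noncomputable section

/-- An abstract simplicial complex on a finite vertex set: a finite family of
nonempty finite subsets closed under taking nonempty subsets. -/
structure SComplex (V : Type*) [DecidableEq V] where
  faces : Finset (Finset V)
  nonempty_of_mem : ∀ s ∈ faces, s.Nonempty
  down_closed : ∀ s ∈ faces, ∀ t ⊆ s, t.Nonempty → t ∈ faces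

variable {V : Type*} [DecidableEq V] [Fintype V]

/-- `α` is a codimension-one face (facet) of `σ`. -/
def IsFacet {W : Type*} (α σ : Finset W) : Prop := α ⊆ σ ∧ σ.card = α.card + 1

/-- `f` is a discrete Morse function on `K`. -/
def SComplex.IsDMF (K : SComplex V) (f : Finset V → ℝ) : Prop :=
  ∀ σ ∈ K.faces,
    (K.faces.filter (fun τ => IsFacet σ τ ∧ f τ ≤ f σ)).card ≤ 1 ∧
    (K.faces.filter (fun ν => IsFacet ν σ ∧ f σ ≤ f ν)).card ≤ 1

/-- `σ` is a critical simplex of `f`. -/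
def SComplex.IsCritical (K : SComplex V) (f : Finset V → ℝ) (σ : Finset V) : Prop :=
  σ ∈ K.faces ∧
  (K.faces.filter (fun τ => IsFacet σ τ ∧ f τ ≤ f σ)).card = 0 ∧
  (K.faces.filter (fun ν => IsFacet ν σ ∧ f σ ≤ f ν)).card = 0

/-- The gradient vector field of `f`: pairs `(α,β)` with `α ≺ β`, `f α ≥ f β`. -/
def SComplex.gvf (K : SComplex V) (f : Finset V → ℝ) : Finset (Finset V × Finset V) :=
  (K.faces ×ˢ K.faces).filter (fun p => IsFacet p.1 p.2 ∧ f p.2 ≤ f p.1)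

/-- `M` is a matching on the Hasse diagram of `K`. -/
def SComplex.IsMatching (K : SComplex V) (M : Finset (Finset V × Finset V)) : Prop :=
  (∀ p ∈ M, p.1 ∈ K.faces ∧ p.2 ∈ K.faces ∧ IsFacet p.1 p.2) ∧
  (∀ p ∈ M, ∀ q ∈ M, p ≠ q → p.1 ≠ q.1 ∧ p.1 ≠ q.2 ∧ p.2 ≠ q.1 ∧ p.2 ≠ q.2)

/-- One step of a `V`-path: from `a` go up to its matched simplex `β` and down to `b ≠ a`. -/
def PathStep (M : Finset (Finset V × Finset V)) (a b : Finset V) : Prop :=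
  a ≠ b ∧ ∃ β, (a, β) ∈ M ∧ IsFacet b β

/-- A `V`-path, recorded by its list of lower-dimensional simplices. -/
def IsVPath (M : Finset (Finset V × Finset V)) : List (Finset V) → Prop
  | [] => False
  | [_] => True
  | a :: b :: rest => PathStep M a b ∧ IsVPath M (b :: rest)

/-- `M` has no nontrivial closed `V`-path. -/
def IsAcyclic (M : Finset (Finset V × Finset V)) : Prop :=
  ¬ ∃ (a : Finset V) (l : List (Finset V)), l ≠ [] ∧ IsVPath M (a :: (l ++ [a]))

/-- An acyclic matching (gradient vector field) on `K`. -/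
def SComplex.IsAcyclicMatching (K : SComplex V) (M : Finset (Finset V × Finset V)) : Prop :=
  K.IsMatching M ∧ IsAcyclic M

/-- The incidence number `[σ:α] = ±1` for a facet `α ≺ σ`. -/
def incidence (σ α : Finset V) : ℤ :=
  if IsFacet α σ then
    (-1 : ℤ) ^ ((σ.filter (fun w => ∀ v ∈ σ \ α,
      ((Fintype.equivFin V) w).val < ((Fintype.equivFin V) v).val)).card)
  else 0

/-- The simplex matched above `a` by `M` (or `∅` if `a` is unmatched). -/
def matchOf (M : Finset (Finset V × Finset V)) (a : Finset V) : Finset V :=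
  if h : ∃ β, (a, β) ∈ M then h.choose else ∅

/-- The weight `m(γ)` of a path: product of the incidence numbers along it. -/
def pathWeight (M : Finset (Finset V × Finset V)) : List (Finset V) → ℤ
  | [] => 1
  | [_] => 1
  | a :: b :: rest =>
      -(incidence (matchOf M a) a * incidence (matchOf M a) b) * pathWeight M (b :: rest)

/-- All duplicate-free lists with entries in `s`. -/
def nodupLists (s : Finset (Finset V)) : Finset (List (Finset V)) :=
  s.powerset.biUnion (fun t => t.val.toList.permutations.toFinset)

/-- The (finite) set of `M`-gradient paths in `K` from `a` to `b`. -/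
def SComplex.pathsBetween (K : SComplex V) (M : Finset (Finset V × Finset V))
    (a b : Finset V) : Finset (List (Finset V)) :=
  (nodupLists K.faces).filter
    (fun l => IsVPath M l ∧ l.head? = some a ∧ l.getLast? = some b)

/-- The connectedness coefficient `n^M(σ, α)`: signed count of gradient paths from
the boundary of `σ` to `α`, weighted by incidence numbers. -/
def SComplex.nCoeff (K : SComplex V) (M : Finset (Finset V × Finset V))
    (σ α : Finset V) : ℤ :=
  ∑ β ∈ K.faces.filter (fun β => IsFacet β σ),
    incidence σ β * ∑ l ∈ K.pathsBetween M β α, pathWeight M l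

/-- The 0-dimensional connectedness coefficient: signed count of paths from `a` to `b`. -/
def SComplex.nCoeff0 (K : SComplex V) (M : Finset (Finset V × Finset V))
    (a b : Finset V) : ℤ :=
  ∑ l ∈ K.pathsBetween M a b, pathWeight M l

end

noncomputable section

variable {V : Type*} [DecidableEq V] [Fintype V]

/-- The connectedness homomorphism `C_*^{f₁} → C_*^{f₂}` between the discrete Morse
complexes (chain groups freely generated by critical simplices), defined on basis
elements by summing connectedness coefficients (with the dimension-0 convention). -/
def connHom (K : SComplex V) (f₁ f₂ : Finset V → ℝ) :
    ({σ : Finset V // K.IsCritical f₁ σ} →₀ ℤ) →ₗ[ℤ]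
    ({σ : Finset V // K.IsCritical f₂ σ} →₀ ℤ) :=
  Finsupp.lsum ℤ (fun σ => LinearMap.toSpanSingleton ℤ _
    (∑ τ ∈ Finset.univ.filter (fun τ : {σ : Finset V // K.IsCritical f₂ σ} =>
        τ.1.card = σ.1.card),
      (if σ.1.card = 1 then K.nCoeff0 (K.gvf f₂) σ.1 τ.1
       else K.nCoeff (K.gvf f₁) σ.1 τ.1) • Finsupp.single τ 1))

/-- `f₁, f₂` differ by a birth: the critical simplices of `f₂` are those of `f₁`
together with one extra pair `(σ̃, α̃)` in consecutive dimensions `(i, i−1)`. -/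
def BDPair (K : SComplex V) (f₁ f₂ : Finset V → ℝ) : Prop :=
  ∃ (i : ℕ) (σt αt : Finset V), 1 ≤ i ∧ σt ∈ K.faces ∧ αt ∈ K.faces ∧
    σt.card = i + 1 ∧ αt.card = i ∧
    K.IsCritical f₂ σt ∧ K.IsCritical f₂ αt ∧
    ¬ K.IsCritical f₁ σt ∧ ¬ K.IsCritical f₁ αt ∧
    ∀ δ, δ ≠ σt → δ ≠ αt → (K.IsCritical f₁ δ ↔ K.IsCritical f₂ δ)

/-- One step: the connectedness homomorphism is an isomorphism, or a birth or death
transition (critical sets differ by one pair in consecutive dimensions). -/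
def TStep (K : SComplex V) (f₁ f₂ : Finset V → ℝ) : Prop :=
  Function.Bijective (connHom K f₁ f₂) ∨ BDPair K f₁ f₂ ∨ BDPair K f₂ f₁

/-- Transitive connectedness of discrete Morse functions: existence of a finite
sequence of discrete Morse functions in which each consecutive connectedness
homomorphism is an isomorphism or a birth/death transition. -/
def TRel (K : SComplex V) (f g : {f : Finset V → ℝ // K.IsDMF f}) : Prop :=
  ∃ (n : ℕ) (F : ℕ → {f : Finset V → ℝ // K.IsDMF f}),
    F 0 = f ∧ F n = g ∧ ∀ j < n, TStep K (F j).1 (F (j + 1)).1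


set_option linter.unusedSectionVars false

namespace DMFAux

variable (K : SComplex V)

lemma mem_gvf {f : Finset V → ℝ} {p : Finset V × Finset V} :
    p ∈ K.gvf f ↔ p.1 ∈ K.faces ∧ p.2 ∈ K.faces ∧ IsFacet p.1 p.2 ∧ f p.2 ≤ f p.1 := by
  simp [SComplex.gvf, Finset.mem_filter, Finset.mem_product, and_assoc]

lemma excl {f : Finset V → ℝ} (hf : K.IsDMF f) {σ τ ν : Finset V}
    (hσ : σ ∈ K.faces) (hτ : τ ∈ K.faces) (hν : ν ∈ K.faces)
    (hστ : IsFacet σ τ) (h1 : f τ ≤ f σ)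
    (hνσ : IsFacet ν σ) (h2 : f σ ≤ f ν) : False := by
  obtain ⟨hsub1, hcard1⟩ := hστ
  obtain ⟨hsub2, hcard2⟩ := hνσ
  -- pick y ∈ τ \ σ
  have hy : (τ \ σ).Nonempty := by
    rw [← Finset.card_pos, Finset.card_sdiff_of_subset hsub1]; omega
  obtain ⟨y, hy⟩ := hy
  have hyτ : y ∈ τ := (Finset.mem_sdiff.mp hy).1
  have hyσ : y ∉ σ := (Finset.mem_sdiff.mp hy).2
  -- pick x ∈ σ \ ν
  have hx : (σ \ ν).Nonempty := by
    rw [← Finset.card_pos, Finset.card_sdiff_of_subset hsub2]; omega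
  obtain ⟨x, hx⟩ := hx
  have hxσ : x ∈ σ := (Finset.mem_sdiff.mp hx).1
  have hxν : x ∉ ν := (Finset.mem_sdiff.mp hx).2
  set σ' := insert y ν with hσ'
  have hyν : y ∉ ν := fun h => hyσ (hsub2 h)
  have hcardσ' : σ'.card = ν.card + 1 := Finset.card_insert_of_notMem hyν
  have hσ'τ : σ' ⊆ τ := by
    intro z hz
    rcases Finset.mem_insert.mp hz with rfl | hz
    · exact hyτ
    · exact hsub1 (hsub2 hz)
  have hσ'mem : σ' ∈ K.faces :=
    K.down_closed τ hτ σ' hσ'τ ⟨y, Finset.mem_insert_self _ _⟩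
  have hne : σ' ≠ σ := by
    intro h
    have : x ∈ σ' := h ▸ hxσ
    rcases Finset.mem_insert.mp this with rfl | hz
    · exact hyσ hxσ
    · exact hxν hz
  have hfacet1 : IsFacet σ' τ := ⟨hσ'τ, by omega⟩
  have hfacet2 : IsFacet ν σ' := ⟨Finset.subset_insert _ _, by omega⟩
  -- from DMF at τ : f σ' < f τ
  have hlt1 : f σ' < f τ := by
    by_contra hcon
    push_neg at hcon
    have hmem1 : σ ∈ K.faces.filter (fun μ => IsFacet μ τ ∧ f τ ≤ f μ) :=
      Finset.mem_filter.mpr ⟨hσ, ⟨hsub1, hcard1⟩, h1⟩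
    have hmem2 : σ' ∈ K.faces.filter (fun μ => IsFacet μ τ ∧ f τ ≤ f μ) :=
      Finset.mem_filter.mpr ⟨hσ'mem, hfacet1, hcon⟩
    have := Finset.card_le_one.mp ((hf τ hτ).2) _ hmem2 _ hmem1
    exact hne this
  -- from DMF at ν : f ν < f σ'
  have hlt2 : f ν < f σ' := by
    by_contra hcon
    push_neg at hcon
    have hmem1 : σ ∈ K.faces.filter (fun μ => IsFacet ν μ ∧ f μ ≤ f ν) :=
      Finset.mem_filter.mpr ⟨hσ, ⟨hsub2, hcard2⟩, h2⟩
    have hmem2 : σ' ∈ K.faces.filter (fun μ => IsFacet ν μ ∧ f μ ≤ f ν) :=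
      Finset.mem_filter.mpr ⟨hσ'mem, hfacet2, hcon⟩
    have := Finset.card_le_one.mp ((hf ν hν).1) _ hmem2 _ hmem1
    exact hne this
  linarith

end DMFAux

namespace DMFAux
variable (K : SComplex V)

lemma perturb {f : Finset V → ℝ} (hf : K.IsDMF f) {α β : Finset V}
    (hp : (α, β) ∈ K.gvf f)
    (hmax : ∀ q ∈ K.gvf f, f q.1 ≤ f α) :
    ∃ f', K.IsDMF f' ∧ K.gvf f' = (K.gvf f).erase (α, β) ∧
      K.IsCritical f' α ∧ K.IsCritical f' β ∧
      ∀ δ, δ ≠ α → δ ≠ β → (K.IsCritical f δ ↔ K.IsCritical f' δ) := by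
  obtain ⟨hα, hβ, hfαβ, h1⟩ := (mem_gvf K).mp hp
  replace hα : α ∈ K.faces := hα
  replace hβ : β ∈ K.faces := hβ
  replace hfαβ : IsFacet α β := hfαβ
  replace h1 : f β ≤ f α := h1
  have hαβ : α ≠ β := by
    intro h; have := hfαβ.2; rw [h] at this; omega
  -- no coface of α other than β is low
  have hupα : ∀ τ ∈ K.faces, IsFacet α τ → τ ≠ β → ¬(f τ ≤ f α) := by
    intro τ hτ hfac hne hle
    have hm1 : τ ∈ K.faces.filter (fun τ => IsFacet α τ ∧ f τ ≤ f α) :=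
      Finset.mem_filter.mpr ⟨hτ, hfac, hle⟩
    have hm2 : β ∈ K.faces.filter (fun τ => IsFacet α τ ∧ f τ ≤ f α) :=
      Finset.mem_filter.mpr ⟨hβ, hfαβ, h1⟩
    exact hne (Finset.card_le_one.mp (hf α hα).1 _ hm1 _ hm2)
  have hdownα : ∀ ν ∈ K.faces, IsFacet ν α → ¬(f α ≤ f ν) := by
    intro ν hν hfac hle
    exact excl K hf hα hβ hν hfαβ h1 hfac hle
  have hdownβ : ∀ ν ∈ K.faces, IsFacet ν β → ν ≠ α → ¬(f β ≤ f ν) := by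
    intro ν hν hfac hne hle
    have hm1 : ν ∈ K.faces.filter (fun ν => IsFacet ν β ∧ f β ≤ f ν) :=
      Finset.mem_filter.mpr ⟨hν, hfac, hle⟩
    have hm2 : α ∈ K.faces.filter (fun ν => IsFacet ν β ∧ f β ≤ f ν) :=
      Finset.mem_filter.mpr ⟨hα, hfαβ, h1⟩
    exact hne (Finset.card_le_one.mp (hf β hβ).2 _ hm1 _ hm2)
  have hupβ : ∀ τ ∈ K.faces, IsFacet β τ → ¬(f τ ≤ f β) := by
    intro τ hτ hfac hle
    exact excl K hf hβ hτ hα hfac hle hfαβ h1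
  -- cofaces of β are strictly above f α  (uses maximality of the pair)
  have hmaxτ : ∀ τ ∈ K.faces, IsFacet β τ → f α < f τ := by
    intro τ hτ hfac
    by_contra hcon
    push_neg at hcon
    have hw : (τ \ β).Nonempty := by
      have h2' := hfac.2
      rw [← Finset.card_pos, Finset.card_sdiff_of_subset hfac.1]; omega
    obtain ⟨w, hw⟩ := hw
    have hwτ : w ∈ τ := (Finset.mem_sdiff.mp hw).1
    have hwβ : w ∉ β := (Finset.mem_sdiff.mp hw).2
    have hwα : w ∉ α := fun h => hwβ (hfαβ.1 h)
    set σ' := insert w α with hσ'def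
    have hcard : σ'.card = α.card + 1 := Finset.card_insert_of_notMem hwα
    have hσ'τ : σ' ⊆ τ := by
      intro z hz
      rcases Finset.mem_insert.mp hz with rfl | hz
      · exact hwτ
      · exact hfac.1 (hfαβ.1 hz)
    have hσ'mem : σ' ∈ K.faces :=
      K.down_closed τ hτ σ' hσ'τ ⟨w, Finset.mem_insert_self _ _⟩
    have hσ'β : σ' ≠ β := by
      intro h; exact hwβ (h ▸ Finset.mem_insert_self w α)
    have hfac1 : IsFacet α σ' := ⟨Finset.subset_insert _ _, hcard⟩
    have hfac2 : IsFacet σ' τ := ⟨hσ'τ, by have := hfac.2; have := hfαβ.2; omega⟩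
    have hgt : f α < f σ' := by
      by_contra hcon2; push_neg at hcon2
      exact hupα σ' hσ'mem hfac1 hσ'β hcon2
    have hgvf : (σ', τ) ∈ K.gvf f :=
      (mem_gvf K).mpr ⟨hσ'mem, hτ, hfac2, by linarith⟩
    have hm : f σ' ≤ f α := hmax _ hgvf
    linarith
  -- choose ε
  set A := K.faces.filter (fun τ => (IsFacet α τ ∧ τ ≠ β) ∨ IsFacet β τ) with hAdef
  have hApos : ∀ τ ∈ A, f α < f τ := by
    intro τ hτ
    obtain ⟨hτf, hc⟩ := Finset.mem_filter.mp hτ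
    rcases hc with ⟨hfac, hne⟩ | hfac
    · by_contra hcon; push_neg at hcon; exact hupα τ hτf hfac hne hcon
    · exact hmaxτ τ hτf hfac
  have hex : ∃ ε : ℝ, 0 < ε ∧ ∀ τ ∈ A, f α + 2 * ε < f τ := by
    rcases A.eq_empty_or_nonempty with hA | hA
    · exact ⟨1, one_pos, by simp [hA]⟩
    · refine ⟨(A.inf' hA f - f α) / 3, ?_, ?_⟩
      · have : f α < A.inf' hA f := (Finset.lt_inf'_iff hA).mpr hApos
        linarith
      · intro τ hτ
        have h2 := Finset.inf'_le f hτ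
        have h3 := hApos τ hτ
        have : f α < A.inf' hA f := (Finset.lt_inf'_iff hA).mpr hApos
        linarith
  obtain ⟨ε, hε0, hεA⟩ := hex
  have hA1 : ∀ τ ∈ K.faces, IsFacet α τ → τ ≠ β → f α + 2 * ε < f τ := by
    intro τ hτ hfac hne
    exact hεA τ (Finset.mem_filter.mpr ⟨hτ, Or.inl ⟨hfac, hne⟩⟩)
  have hA2 : ∀ τ ∈ K.faces, IsFacet β τ → f α + 2 * ε < f τ := by
    intro τ hτ hfac
    exact hεA τ (Finset.mem_filter.mpr ⟨hτ, Or.inr hfac⟩)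
  set f' := fun σ => if σ = α then f α + ε else if σ = β then f α + 2 * ε else f σ
    with hf'def
  have hf'α : f' α = f α + ε := by simp [hf'def]
  have hf'β : f' β = f α + 2 * ε := by simp [hf'def, hαβ.symm, Ne.symm hαβ]
  have hf'o : ∀ σ, σ ≠ α → σ ≠ β → f' σ = f σ := by
    intro σ h1' h2'; simp [hf'def, h1', h2']
  -- the key local characterization
  have L : ∀ ν σ, ν ∈ K.faces → σ ∈ K.faces → IsFacet ν σ →
      (f' σ ≤ f' ν ↔ (f σ ≤ f ν ∧ ¬(ν = α ∧ σ = β))) := by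
    intro ν σ hν hσ hfac
    by_cases hνα : ν = α
    · subst hνα
      by_cases hσβ : σ = β
      · subst hσβ
        rw [hf'α, hf'β]
        apply iff_of_false
        · intro h; linarith
        · rintro ⟨-, h⟩; exact h ⟨rfl, rfl⟩
      · have hσα : σ ≠ ν := by
          intro h; rw [h] at hfac; have := hfac.2; omega
        rw [hf'o σ hσα hσβ, hf'α]
        have hgt := hA1 σ hσ hfac hσβ
        apply iff_of_false
        · intro h; linarith
        · rintro ⟨h, -⟩; exact hupα σ hσ hfac hσβ h
    · by_cases hσα : σ = α
      · subst hσα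
        have hνβ : ν ≠ β := by
          intro h; rw [h] at hfac; have := hfac.2; have := hfαβ.2; omega
        rw [hf'o ν hνα hνβ, hf'α]
        have hlt : ¬ (f σ ≤ f ν) := hdownα ν hν hfac
        push_neg at hlt
        apply iff_of_false
        · intro h; linarith
        · rintro ⟨h, -⟩; linarith
      · by_cases hσβ : σ = β
        · subst hσβ
          have hνβ : ν ≠ σ := by
            intro h; rw [h] at hfac; have := hfac.2; omega
          rw [hf'o ν hνα hνβ, hf'β]
          have hlt : ¬ (f σ ≤ f ν) := hdownβ ν hν hfac hνα
          push_neg at hlt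
          apply iff_of_false
          · intro h; linarith
          · rintro ⟨h, -⟩; linarith
        · by_cases hνβ : ν = β
          · subst hνβ
            rw [hf'o σ hσα hσβ, hf'β]
            have hgt := hA2 σ hσ hfac
            apply iff_of_false
            · intro h; linarith
            · rintro ⟨h, -⟩; exact hupβ σ hσ hfac h
          · rw [hf'o ν hνα hνβ, hf'o σ hσα hσβ]
            simp [hνα]
  refine ⟨f', ?_, ?_, ?_, ?_, ?_⟩
  · -- IsDMF f'
    intro σ hσ
    constructor
    · refine le_trans (Finset.card_le_card ?_) (hf σ hσ).1
      intro τ hτ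
      rw [Finset.mem_filter] at hτ ⊢
      obtain ⟨hτf, hfac, hle⟩ := hτ
      exact ⟨hτf, hfac, ((L σ τ hσ hτf hfac).mp hle).1⟩
    · refine le_trans (Finset.card_le_card ?_) (hf σ hσ).2
      intro ν hν
      rw [Finset.mem_filter] at hν ⊢
      obtain ⟨hνf, hfac, hle⟩ := hν
      exact ⟨hνf, hfac, ((L ν σ hνf hσ hfac).mp hle).1⟩
  · -- gvf
    ext ⟨p1, p2⟩
    rw [Finset.mem_erase, mem_gvf, mem_gvf]
    simp only [Prod.mk.injEq]
    constructor
    · rintro ⟨h1', h2', h3', h4'⟩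
      have := (L p1 p2 h1' h2' h3').mp h4'
      refine ⟨fun h => this.2 ?_, h1', h2', h3', this.1⟩
      cases h
      exact ⟨rfl, rfl⟩
    · rintro ⟨hne, h1', h2', h3', h4'⟩
      exact ⟨h1', h2', h3', (L p1 p2 h1' h2' h3').mpr
        ⟨h4', fun h => hne (by rw [h.1, h.2])⟩⟩
  · -- α critical for f'
    refine ⟨hα, Finset.card_eq_zero.mpr ?_, Finset.card_eq_zero.mpr ?_⟩
    · rw [Finset.eq_empty_iff_forall_notMem]
      intro τ hmem
      obtain ⟨hτ, hfac, hle⟩ := Finset.mem_filter.mp hmem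
      obtain ⟨hle', hne⟩ := (L α τ hα hτ hfac).mp hle
      have hτβ : τ ≠ β := fun h => hne ⟨rfl, h⟩
      exact hupα τ hτ hfac hτβ hle'
    · rw [Finset.eq_empty_iff_forall_notMem]
      intro ν hmem
      obtain ⟨hν, hfac, hle⟩ := Finset.mem_filter.mp hmem
      obtain ⟨hle', -⟩ := (L ν α hν hα hfac).mp hle
      exact hdownα ν hν hfac hle'
  · -- β critical for f'
    refine ⟨hβ, Finset.card_eq_zero.mpr ?_, Finset.card_eq_zero.mpr ?_⟩
    · rw [Finset.eq_empty_iff_forall_notMem]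
      intro τ hmem
      obtain ⟨hτ, hfac, hle⟩ := Finset.mem_filter.mp hmem
      obtain ⟨hle', -⟩ := (L β τ hβ hτ hfac).mp hle
      exact hupβ τ hτ hfac hle'
    · rw [Finset.eq_empty_iff_forall_notMem]
      intro ν hmem
      obtain ⟨hν, hfac, hle⟩ := Finset.mem_filter.mp hmem
      obtain ⟨hle', hne⟩ := (L ν β hν hβ hfac).mp hle
      have hνα : ν ≠ α := fun h => hne ⟨h, rfl⟩
      exact hdownβ ν hν hfac hνα hle'
  · -- other simplices unchanged
    intro δ hδα hδβ
    constructor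
    · rintro ⟨hδf, hu, hd⟩
      refine ⟨hδf, Finset.card_eq_zero.mpr ?_, Finset.card_eq_zero.mpr ?_⟩
      · rw [Finset.eq_empty_iff_forall_notMem]
        intro τ hmem
        obtain ⟨hτ, hfac, hle⟩ := Finset.mem_filter.mp hmem
        obtain ⟨hle', -⟩ := (L δ τ hδf hτ hfac).mp hle
        have : τ ∈ K.faces.filter (fun τ => IsFacet δ τ ∧ f τ ≤ f δ) :=
          Finset.mem_filter.mpr ⟨hτ, hfac, hle'⟩
        rw [Finset.card_eq_zero.mp hu] at this
        exact absurd this (Finset.notMem_empty _)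
      · rw [Finset.eq_empty_iff_forall_notMem]
        intro ν hmem
        obtain ⟨hν, hfac, hle⟩ := Finset.mem_filter.mp hmem
        obtain ⟨hle', -⟩ := (L ν δ hν hδf hfac).mp hle
        have : ν ∈ K.faces.filter (fun ν => IsFacet ν δ ∧ f δ ≤ f ν) :=
          Finset.mem_filter.mpr ⟨hν, hfac, hle'⟩
        rw [Finset.card_eq_zero.mp hd] at this
        exact absurd this (Finset.notMem_empty _)
    · rintro ⟨hδf, hu, hd⟩
      refine ⟨hδf, Finset.card_eq_zero.mpr ?_, Finset.card_eq_zero.mpr ?_⟩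
      · rw [Finset.eq_empty_iff_forall_notMem]
        intro τ hmem
        obtain ⟨hτ, hfac, hle⟩ := Finset.mem_filter.mp hmem
        have hle' : f' τ ≤ f' δ :=
          (L δ τ hδf hτ hfac).mpr ⟨hle, fun h => hδα h.1⟩
        have : τ ∈ K.faces.filter (fun τ => IsFacet δ τ ∧ f' τ ≤ f' δ) :=
          Finset.mem_filter.mpr ⟨hτ, hfac, hle'⟩
        rw [Finset.card_eq_zero.mp hu] at this
        exact absurd this (Finset.notMem_empty _)
      · rw [Finset.eq_empty_iff_forall_notMem]
        intro ν hmem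
        obtain ⟨hν, hfac, hle⟩ := Finset.mem_filter.mp hmem
        have hle' : f' δ ≤ f' ν :=
          (L ν δ hν hδf hfac).mpr ⟨hle, fun h => hδβ h.2⟩
        have : ν ∈ K.faces.filter (fun ν => IsFacet ν δ ∧ f' δ ≤ f' ν) :=
          Finset.mem_filter.mpr ⟨hν, hfac, hle'⟩
        rw [Finset.card_eq_zero.mp hd] at this
        exact absurd this (Finset.notMem_empty _)

end DMFAux

namespace DMFAux
variable (K : SComplex V)

/-- The dimension function, a discrete Morse function with all faces critical. -/
def dimf : Finset V → ℝ := fun σ => σ.card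

lemma nolow_aux {f : Finset V → ℝ}
    (hx : ∀ ν σ, ν ∈ K.faces → σ ∈ K.faces → IsFacet ν σ → ¬ f σ ≤ f ν) :
    K.IsDMF f ∧ (∀ σ, K.IsCritical f σ ↔ σ ∈ K.faces) ∧ K.gvf f = ∅ := by
  have hup : ∀ σ ∈ K.faces, K.faces.filter (fun τ => IsFacet σ τ ∧ f τ ≤ f σ) = ∅ := by
    intro σ hσ
    rw [Finset.eq_empty_iff_forall_notMem]
    intro τ hmem
    obtain ⟨hτ, hfac, hle⟩ := Finset.mem_filter.mp hmem
    exact hx σ τ hσ hτ hfac hle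
  have hdown : ∀ σ ∈ K.faces, K.faces.filter (fun ν => IsFacet ν σ ∧ f σ ≤ f ν) = ∅ := by
    intro σ hσ
    rw [Finset.eq_empty_iff_forall_notMem]
    intro ν hmem
    obtain ⟨hν, hfac, hle⟩ := Finset.mem_filter.mp hmem
    exact hx ν σ hν hσ hfac hle
  refine ⟨?_, ?_, ?_⟩
  · intro σ hσ
    rw [hup σ hσ, hdown σ hσ]
    simp
  · intro σ
    constructor
    · exact fun h => h.1
    · intro hσ
      exact ⟨hσ, by rw [hup σ hσ]; simp, by rw [hdown σ hσ]; simp⟩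
  · rw [Finset.eq_empty_iff_forall_notMem]
    intro p hp
    obtain ⟨h1, h2, h3, h4⟩ := (mem_gvf K).mp hp
    exact hx p.1 p.2 h1 h2 h3 h4

lemma dimf_spec :
    K.IsDMF (dimf (V := V)) ∧ (∀ σ, K.IsCritical (dimf (V := V)) σ ↔ σ ∈ K.faces) ∧
      K.gvf (dimf (V := V)) = ∅ := by
  apply nolow_aux
  intro ν σ _ _ hfac hle
  have h2 := hfac.2
  simp only [dimf] at hle
  rw [h2] at hle
  push_cast at hle
  linarith

lemma crit_of_gvf_empty {f : Finset V → ℝ} (h : K.gvf f = ∅) :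
    ∀ σ, K.IsCritical f σ ↔ σ ∈ K.faces := by
  intro σ
  constructor
  · exact fun h => h.1
  · intro hσ
    refine ⟨hσ, Finset.card_eq_zero.mpr ?_, Finset.card_eq_zero.mpr ?_⟩
    · rw [Finset.eq_empty_iff_forall_notMem]
      intro τ hmem
      obtain ⟨hτ, hfac, hle⟩ := Finset.mem_filter.mp hmem
      have : (σ, τ) ∈ K.gvf f := (mem_gvf K).mpr ⟨hσ, hτ, hfac, hle⟩
      rw [h] at this
      exact absurd this (Finset.notMem_empty _)
    · rw [Finset.eq_empty_iff_forall_notMem]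
      intro ν hmem
      obtain ⟨hν, hfac, hle⟩ := Finset.mem_filter.mp hmem
      have : (ν, σ) ∈ K.gvf f := (mem_gvf K).mpr ⟨hν, hσ, hfac, hle⟩
      rw [h] at this
      exact absurd this (Finset.notMem_empty _)

/-- A discrete Morse function whose only gradient pair is `(β₀.erase x, β₀)`. -/
lemma exists_onepair {β₀ : Finset V} (hβ₀ : β₀ ∈ K.faces) (h2 : 2 ≤ β₀.card) :
    ∃ (f₁ : Finset V → ℝ) (α₀ : Finset V), K.IsDMF f₁ ∧ α₀ ∈ K.faces ∧
      IsFacet α₀ β₀ ∧ ¬ K.IsCritical f₁ α₀ ∧ ¬ K.IsCritical f₁ β₀ ∧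
      ∀ δ, δ ≠ α₀ → δ ≠ β₀ → (K.IsCritical f₁ δ ↔ δ ∈ K.faces) := by
  obtain ⟨x, hx⟩ := Finset.card_pos.mp (by omega : 0 < β₀.card)
  set α₀ := β₀.erase x with hα₀def
  have hcard : α₀.card + 1 = β₀.card := by
    rw [hα₀def, Finset.card_erase_of_mem hx]; omega
  have hfacαβ : IsFacet α₀ β₀ := ⟨Finset.erase_subset _ _, by omega⟩
  have hα₀ : α₀ ∈ K.faces := by
    apply K.down_closed β₀ hβ₀ α₀ (Finset.erase_subset _ _)
    rw [← Finset.card_pos]; omega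
  have hαβ : α₀ ≠ β₀ := by
    intro h; rw [h] at hcard; omega
  set c := α₀.card with hcdef
  set f₁ := fun σ : Finset V => if σ = α₀ then (c : ℝ) + 9/10
    else if σ = β₀ then (c : ℝ) + 8/10 else (σ.card : ℝ) with hf₁def
  have hv1 : f₁ α₀ = (c : ℝ) + 9/10 := by simp [hf₁def]
  have hv2 : f₁ β₀ = (c : ℝ) + 8/10 := by simp [hf₁def, Ne.symm hαβ]
  have hvo : ∀ σ, σ ≠ α₀ → σ ≠ β₀ → f₁ σ = (σ.card : ℝ) := by
    intro σ ha hb; simp [hf₁def, ha, hb]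
  -- characterization of low incidences
  have L1 : ∀ ν σ, IsFacet ν σ → (f₁ σ ≤ f₁ ν ↔ (ν = α₀ ∧ σ = β₀)) := by
    intro ν σ hfac
    have hcc := hfac.2
    by_cases hνα : ν = α₀
    · by_cases hσβ : σ = β₀
      · rw [hνα, hσβ, hv1, hv2]
        constructor
        · intro _; exact ⟨rfl, rfl⟩
        · intro _; linarith
      · have hσα : σ ≠ α₀ := by
          intro h; rw [h, hνα] at hcc; omega
        rw [hνα, hvo σ hσα hσβ, hv1]
        have hcc2 : σ.card = c + 1 := by rw [hcc, hνα]
        apply iff_of_false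
        · rw [hcc2]; push_cast; intro h; linarith
        · rintro ⟨-, h⟩; exact hσβ h
    · by_cases hσα : σ = α₀
      · have hνβ : ν ≠ β₀ := by
          intro h; rw [h, hσα] at hcc; omega
        rw [hσα, hvo ν hνα hνβ, hv1]
        have hcc2 : ν.card + 1 = c := by rw [← hcc, hσα]
        apply iff_of_false
        · rw [← hcc2]; push_cast; intro h; linarith
        · rintro ⟨h, -⟩; exact hνα h
      · by_cases hσβ : σ = β₀
        · have hνβ : ν ≠ β₀ := by intro h; rw [h, hσβ] at hcc; omega
          rw [hσβ, hvo ν hνα hνβ, hv2]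
          have hcc2 : ν.card = c := by rw [hσβ] at hcc; omega
          apply iff_of_false
          · rw [hcc2]; intro h; linarith
          · rintro ⟨h, -⟩; exact hνα h
        · by_cases hνβ : ν = β₀
          · rw [hνβ, hvo σ hσα hσβ, hv2]
            have hcc2 : σ.card = c + 2 := by rw [hνβ] at hcc; omega
            apply iff_of_false
            · rw [hcc2]; push_cast; intro h; linarith
            · rintro ⟨h, -⟩; exact hαβ h.symm
          · rw [hvo σ hσα hσβ, hvo ν hνα hνβ]
            apply iff_of_false
            · rw [hcc]; push_cast; intro h; linarith
            · rintro ⟨h, -⟩; exact hνα h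
  refine ⟨f₁, α₀, ?_, hα₀, hfacαβ, ?_, ?_, ?_⟩
  · -- IsDMF
    intro σ hσ
    constructor
    · apply Finset.card_le_one.mpr
      intro a ha b hb
      obtain ⟨-, hfa, hla⟩ := Finset.mem_filter.mp ha
      obtain ⟨-, hfb, hlb⟩ := Finset.mem_filter.mp hb
      have h1 := ((L1 σ a hfa).mp hla).2
      have h2 := ((L1 σ b hfb).mp hlb).2
      rw [h1, h2]
    · apply Finset.card_le_one.mpr
      intro a ha b hb
      obtain ⟨-, hfa, hla⟩ := Finset.mem_filter.mp ha
      obtain ⟨-, hfb, hlb⟩ := Finset.mem_filter.mp hb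
      have h1 := ((L1 a σ hfa).mp hla).1
      have h2 := ((L1 b σ hfb).mp hlb).1
      rw [h1, h2]
  · -- α₀ not critical
    rintro ⟨-, hu, -⟩
    rw [Finset.card_eq_zero, Finset.eq_empty_iff_forall_notMem] at hu
    exact hu β₀ (Finset.mem_filter.mpr ⟨hβ₀, hfacαβ, (L1 α₀ β₀ hfacαβ).mpr ⟨rfl, rfl⟩⟩)
  · -- β₀ not critical
    rintro ⟨-, -, hd⟩
    rw [Finset.card_eq_zero, Finset.eq_empty_iff_forall_notMem] at hd
    exact hd α₀ (Finset.mem_filter.mpr ⟨hα₀, hfacαβ, (L1 α₀ β₀ hfacαβ).mpr ⟨rfl, rfl⟩⟩)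
  · -- others critical
    intro δ hδα hδβ
    constructor
    · exact fun h => h.1
    · intro hδ
      refine ⟨hδ, Finset.card_eq_zero.mpr ?_, Finset.card_eq_zero.mpr ?_⟩
      · rw [Finset.eq_empty_iff_forall_notMem]
        intro τ hmem
        obtain ⟨hτ, hfac, hle⟩ := Finset.mem_filter.mp hmem
        exact hδα ((L1 δ τ hfac).mp hle).1
      · rw [Finset.eq_empty_iff_forall_notMem]
        intro ν hmem
        obtain ⟨hν, hfac, hle⟩ := Finset.mem_filter.mp hmem
        exact hδβ ((L1 ν δ hfac).mp hle).2

end DMFAux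

namespace DMFAux
variable (K : SComplex V)

def htop : {f : Finset V → ℝ // K.IsDMF f} := ⟨dimf, (dimf_spec K).1⟩

lemma bdpair_mk {f₁ f₂ : Finset V → ℝ} {α β : Finset V} (hα : α ∈ K.faces)
    (hβ : β ∈ K.faces) (hfac : IsFacet α β)
    (h2β : K.IsCritical f₂ β) (h2α : K.IsCritical f₂ α)
    (h1β : ¬ K.IsCritical f₁ β) (h1α : ¬ K.IsCritical f₁ α)
    (hrest : ∀ δ, δ ≠ β → δ ≠ α → (K.IsCritical f₁ δ ↔ K.IsCritical f₂ δ)) :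
    BDPair K f₁ f₂ :=
  ⟨α.card, β, α, Finset.card_pos.mpr (K.nonempty_of_mem α hα), hβ, hα, hfac.2, rfl,
    h2β, h2α, h1β, h1α, hrest⟩

lemma trel_single {f g : {f : Finset V → ℝ // K.IsDMF f}} (h : TStep K f.1 g.1) :
    TRel K f g := by
  refine ⟨1, fun j => if j = 0 then f else g, by simp, by simp, ?_⟩
  intro j hj
  have hj0 : j = 0 := by omega
  subst hj0
  simpa using h

lemma trel_trans {f g h : {f : Finset V → ℝ // K.IsDMF f}} :
    TRel K f g → TRel K g h → TRel K f h := by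
  rintro ⟨n, F, hF0, hFn, hFs⟩ ⟨m, G, hG0, hGm, hGs⟩
  refine ⟨n + m, fun j => if j ≤ n then F j else G (j - n), by simp [hF0], ?_, ?_⟩
  · show (if n + m ≤ n then F (n + m) else G (n + m - n)) = h
    by_cases hm : m = 0
    · subst hm
      simp only [Nat.add_zero, if_pos (le_refl n)]
      rw [hFn, ← hG0, hGm]
    · have hnot : ¬ (n + m ≤ n) := by omega
      rw [if_neg hnot]
      have e : n + m - n = m := by omega
      rw [e, hGm]
  · intro j hj
    show TStep K (if j ≤ n then F j else G (j - n)).1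
      (if j + 1 ≤ n then F (j + 1) else G (j + 1 - n)).1
    by_cases h1 : j + 1 ≤ n
    · have h0 : j ≤ n := by omega
      simp only [if_pos h0, if_pos h1]
      exact hFs j (by omega)
    · by_cases h0 : j ≤ n
      · have hjn : j = n := by omega
        subst hjn
        simp only [if_pos h0, if_neg h1]
        have e : j + 1 - j = 1 := by omega
        rw [e, hFn, ← hG0]
        exact hGs 0 (by omega)
      · simp only [if_neg h0, if_neg h1]
        have e : j + 1 - n = (j - n) + 1 := by omega
        rw [e]
        exact hGs (j - n) (by omega)

lemma chain_to_top (hK : ∃ β ∈ K.faces, 2 ≤ β.card)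
    (f : {f : Finset V → ℝ // K.IsDMF f}) :
    TRel K f (htop K) ∧ TRel K (htop K) f := by
  suffices H : ∀ n (f : {f : Finset V → ℝ // K.IsDMF f}), (K.gvf f.1).card = n →
      TRel K f (htop K) ∧ TRel K (htop K) f by exact H _ f rfl
  intro n
  induction n using Nat.strong_induction_on with
  | _ n ih =>
    intro f hn
    rcases (K.gvf f.1).eq_empty_or_nonempty with hemp | hne
    · -- base case: all faces critical; detour through a one-pair function
      obtain ⟨β₀, hβ₀, h2⟩ := hK
      obtain ⟨f₁, α₀, hdmf₁, hα₀, hfacαβ, hnc₁α, hnc₁β, hrest₁⟩ :=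
        exists_onepair K hβ₀ h2
      have hcritf := crit_of_gvf_empty K hemp
      have hcritt := (dimf_spec K).2.1
      have bd1 : BDPair K f₁ f.1 := by
        refine bdpair_mk K hα₀ hβ₀ hfacαβ ((hcritf β₀).mpr hβ₀)
          ((hcritf α₀).mpr hα₀) hnc₁β hnc₁α ?_
        intro δ hδβ hδα
        exact (hrest₁ δ hδα hδβ).trans (hcritf δ).symm
      have bd2 : BDPair K f₁ (dimf (V := V)) := by
        refine bdpair_mk K hα₀ hβ₀ hfacαβ ((hcritt β₀).mpr hβ₀)
          ((hcritt α₀).mpr hα₀) hnc₁β hnc₁α ?_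
        intro δ hδβ hδα
        exact (hrest₁ δ hδα hδβ).trans (hcritt δ).symm
      have s1 : TStep K f.1 f₁ := Or.inr (Or.inr bd1)
      have s2 : TStep K f₁ (dimf (V := V)) := Or.inr (Or.inl bd2)
      have s1' : TStep K f₁ f.1 := Or.inr (Or.inl bd1)
      have s2' : TStep K (dimf (V := V)) f₁ := Or.inr (Or.inr bd2)
      have hf₁ : ({ val := f₁, property := hdmf₁ } :
          {f : Finset V → ℝ // K.IsDMF f}).1 = f₁ := rfl
      constructor
      · exact trel_trans K (trel_single K (f := f) (g := ⟨f₁, hdmf₁⟩) s1)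
          (trel_single K (f := ⟨f₁, hdmf₁⟩) (g := htop K) s2)
      · exact trel_trans K (trel_single K (f := htop K) (g := ⟨f₁, hdmf₁⟩) s2')
          (trel_single K (f := ⟨f₁, hdmf₁⟩) (g := f) s1')
    · -- inductive step: delete a maximal gradient pair
      obtain ⟨p, hp, hmaxp⟩ := Finset.exists_max_image (K.gvf f.1) (fun q => f.1 q.1) hne
      obtain ⟨α, β⟩ := p
      have hp' : (α, β) ∈ K.gvf f.1 := hp
      have hmax : ∀ q ∈ K.gvf f.1, f.1 q.1 ≤ f.1 α := fun q hq => hmaxp q hq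
      obtain ⟨f', hdmf', hgvf', hcα, hcβ, hpres⟩ := perturb K f.2 hp' hmax
      obtain ⟨hα, hβ, hfacαβ, h1⟩ := (mem_gvf K).mp hp'
      replace hα : α ∈ K.faces := hα
      replace hβ : β ∈ K.faces := hβ
      replace hfacαβ : IsFacet α β := hfacαβ
      replace h1 : f.1 β ≤ f.1 α := h1
      have hcard' : (K.gvf f').card = n - 1 := by
        rw [hgvf', Finset.card_erase_of_mem hp', hn]
      have hpos : 1 ≤ n := by
        rw [← hn]
        exact Finset.card_pos.mpr ⟨(α, β), hp'⟩
      obtain ⟨ih1, ih2⟩ := ih (n - 1) (by omega) ⟨f', hdmf'⟩ hcard'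
      have bd : BDPair K f.1 f' := by
        refine bdpair_mk K hα hβ hfacαβ hcβ hcα ?_ ?_ ?_
        · rintro ⟨-, -, hd⟩
          rw [Finset.card_eq_zero, Finset.eq_empty_iff_forall_notMem] at hd
          exact hd α (Finset.mem_filter.mpr ⟨hα, hfacαβ, h1⟩)
        · rintro ⟨-, hu, -⟩
          rw [Finset.card_eq_zero, Finset.eq_empty_iff_forall_notMem] at hu
          exact hu β (Finset.mem_filter.mpr ⟨hβ, hfacαβ, h1⟩)
        · intro δ hδβ hδα
          exact hpres δ hδα hδβ
      have s : TStep K f.1 f' := Or.inr (Or.inl bd)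
      have s' : TStep K f' f.1 := Or.inr (Or.inr bd)
      constructor
      · exact trel_trans K (trel_single K (f := f) (g := ⟨f', hdmf'⟩) s) ih1
      · exact trel_trans K ih2 (trel_single K (f := ⟨f', hdmf'⟩) (g := f) s')

end DMFAux

namespace DMFAux
variable (K : SComplex V)

lemma gvf_empty_of_vertex (hK : ∀ σ ∈ K.faces, σ.card = 1) (f : Finset V → ℝ) :
    K.gvf f = ∅ := by
  rw [Finset.eq_empty_iff_forall_notMem]
  intro p hp
  obtain ⟨h1, h2, h3, -⟩ := (mem_gvf K).mp hp
  have := hK _ h1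
  have := hK _ h2
  have := h3.2
  omega

lemma pathsBetween_empty (a b : Finset V) :
    K.pathsBetween ∅ a b = if a = b ∧ a ∈ K.faces then {[a]} else ∅ := by
  ext l
  rw [SComplex.pathsBetween, Finset.mem_filter]
  constructor
  · rintro ⟨hl, hvp, hh, hlast⟩
    match l, hvp with
    | [x], _ =>
      simp only [List.head?] at hh
      have hxa : x = a := by injection hh
      subst hxa
      have hxb : x = b := by
        simp only [List.getLast?] at hlast
        injection hlast
      subst hxb
      have hxmem : x ∈ K.faces := by
        simp only [nodupLists, Finset.mem_biUnion] at hl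
        obtain ⟨t, ht, hperm⟩ := hl
        rw [List.mem_toFinset, List.mem_permutations] at hperm
        have : x ∈ t.val.toList := hperm.mem_iff.mp (List.mem_singleton_self x)
        rw [Multiset.mem_toList] at this
        exact Finset.mem_powerset.mp ht this
      rw [if_pos ⟨rfl, hxmem⟩]
      exact Finset.mem_singleton_self _
    | x :: y :: r, hvp =>
      obtain ⟨⟨-, β, hmem, -⟩, -⟩ := hvp
      exact absurd hmem (Finset.notMem_empty _)
  · intro hl
    by_cases hab : a = b ∧ a ∈ K.faces
    · rw [if_pos hab] at hl
      rw [Finset.mem_singleton] at hl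
      subst hl
      refine ⟨?_, trivial, rfl, by rw [← hab.1]; rfl⟩
      simp only [nodupLists, Finset.mem_biUnion]
      refine ⟨{a}, Finset.mem_powerset.mpr (Finset.singleton_subset_iff.mpr hab.2), ?_⟩
      rw [List.mem_toFinset, List.mem_permutations]
      apply Multiset.coe_eq_coe.mp
      rw [Multiset.coe_toList]
      rfl
    · rw [if_neg hab] at hl
      exact absurd hl (Finset.notMem_empty _)

lemma nCoeff0_empty (a b : Finset V) (ha : a ∈ K.faces) :
    K.nCoeff0 ∅ a b = if a = b then 1 else 0 := by
  rw [SComplex.nCoeff0, pathsBetween_empty]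
  by_cases hab : a = b
  · rw [if_pos ⟨hab, ha⟩, if_pos hab]
    simp [pathWeight]
  · rw [if_neg (fun h => hab h.1), if_neg hab]
    simp

lemma connHom_single_vertex (hK : ∀ σ ∈ K.faces, σ.card = 1)
    (f g : Finset V → ℝ) (σ : {σ : Finset V // K.IsCritical f σ}) :
    connHom K f g (Finsupp.single σ 1) =
      Finsupp.single ⟨σ.1, (crit_of_gvf_empty K (gvf_empty_of_vertex K hK g) σ.1).mpr
        σ.2.1⟩ 1 := by
  set σ' : {σ : Finset V // K.IsCritical g σ} :=
    ⟨σ.1, (crit_of_gvf_empty K (gvf_empty_of_vertex K hK g) σ.1).mpr σ.2.1⟩ with hσ'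
  rw [connHom, Finsupp.lsum_single, LinearMap.toSpanSingleton_apply, one_smul]
  have hfilter : Finset.univ.filter (fun τ : {σ : Finset V // K.IsCritical g σ} =>
      τ.1.card = σ.1.card) = Finset.univ := by
    apply Finset.filter_true_of_mem
    intro τ _
    rw [hK _ τ.2.1, hK _ σ.2.1]
  rw [hfilter]
  have hcard1 : σ.1.card = 1 := hK _ σ.2.1
  rw [Finset.sum_congr rfl (fun τ _ => by
    rw [if_pos hcard1, gvf_empty_of_vertex K hK g, nCoeff0_empty K _ _ σ.2.1])]
  rw [Finset.sum_eq_single σ']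
  · rw [if_pos rfl, one_smul]
  · intro τ _ hτ
    rw [if_neg, zero_smul]
    intro h
    exact hτ (Subtype.ext h.symm)
  · intro h
    exact absurd (Finset.mem_univ σ') h

lemma bij_vertex (hK : ∀ σ ∈ K.faces, σ.card = 1) (f g : Finset V → ℝ) :
    Function.Bijective (connHom K f g) := by
  have key : ∀ (f g : Finset V → ℝ) (v : {σ : Finset V // K.IsCritical f σ} →₀ ℤ),
      connHom K g f (connHom K f g v) = v := by
    intro f g
    suffices h : (connHom K g f).comp (connHom K f g) = LinearMap.id by
      intro v
      have := congrArg (fun φ => φ v) h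
      simpa using this
    apply Finsupp.lhom_ext
    intro a b
    have hb : (Finsupp.single a b : {σ : Finset V // K.IsCritical f σ} →₀ ℤ)
        = b • Finsupp.single a 1 := by
      rw [Finsupp.smul_single, smul_eq_mul, mul_one]
    rw [hb]
    simp only [LinearMap.comp_apply, LinearMap.id_apply, map_smul]
    rw [connHom_single_vertex K hK f g a, connHom_single_vertex K hK g f]
  exact ⟨Function.LeftInverse.injective (key f g),
    Function.RightInverse.surjective (fun v => key g f v)⟩

end DMFAux

/-- the quotient of the set of discrete Morse functions on `K` by
transitive connectedness is a single point: any two discrete Morse functions on `K`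
are transitively connected. -/
theorem TRel_quotient_single_point (K : SComplex V) :
    (∀ f g : {f : Finset V → ℝ // K.IsDMF f}, TRel K f g) ∧
    Subsingleton (Quot (TRel K)) := by
  have main : ∀ f g : {f : Finset V → ℝ // K.IsDMF f}, TRel K f g := by
    intro f g
    by_cases hK : ∃ β ∈ K.faces, 2 ≤ β.card
    · exact DMFAux.trel_trans K (DMFAux.chain_to_top K hK f).1
        (DMFAux.chain_to_top K hK g).2
    · push_neg at hK
      have hv : ∀ σ ∈ K.faces, σ.card = 1 := by
        intro σ hσ
        have h1 := hK σ hσ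
        have h2 := Finset.card_pos.mpr (K.nonempty_of_mem σ hσ)
        omega
      exact DMFAux.trel_single K (Or.inl (DMFAux.bij_vertex K hv f.1 g.1))
  refine ⟨main, ?_⟩
  constructor
  intro a b
  exact Quot.inductionOn a (fun f => Quot.inductionOn b
    (fun g => Quot.sound (main f g)))

end
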